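/- Let r ≥ 1 and b ≥ 2 be integers with b squarefree, such that P(X) = X³ + 3rbX − b ∈ ℤ[X] is irreducible and monogenic, i.e., the ring of integers O_L of L = ℚ(θ) equals ℤ[θ] for the real root θ of P. Let ι : L → ℝ be the real embedding (with ι(θ) the real root of P) and τ : L → ℂ a complex embedding of L. Then there is no nonzero ν ∈ O_L with |ι(ν)| < ι(θ) and |τ(ν)| < |τ(θ)|; that is, θ is always a lattice minimum of O_L. -/

import Mathlib

open NumberField Polynomial

private lemma aux_rep {S : Type*} [CommRing S] (A B : ℤ) (x : S)
    (hx : x ^ 3 + (A : S) * x - (B : S) = 0) (p : ℤ[X]) :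
    ∃ u v w : ℤ, aeval x p = (u : S) + (v : S) * x + (w : S) * x ^ 2 := by
  have hPm : (X ^ 3 + C A * X - C B : ℤ[X]).Monic := by monicity!
  have hdeg : (X ^ 3 + C A * X - C B : ℤ[X]).degree = 3 := by compute_degree!
  set P : ℤ[X] := X ^ 3 + C A * X - C B with hP
  set q := p %ₘ P with hq
  have hqdeg : q.natDegree ≤ 2 := by
    by_cases h0 : q = 0
    · simp [h0]
    · have hlt := degree_modByMonic_lt p hPm
      rw [hdeg] at hlt
      have h3 : q.natDegree < 3 := by
        exact_mod_cast (natDegree_lt_iff_degree_lt h0).mpr (by exact_mod_cast hlt)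
      omega
  refine ⟨q.coeff 0, q.coeff 1, q.coeff 2, ?_⟩
  have hqeq : q = C (q.coeff 0) + C (q.coeff 1) * X + C (q.coeff 2) * X ^ 2 := by
    ext n
    simp only [coeff_add, coeff_C_mul, coeff_X, coeff_C, coeff_X_pow, mul_ite, mul_one, mul_zero]
    match n with
    | 0 => simp
    | 1 => simp
    | 2 => simp
    | (n+3) =>
      rw [coeff_eq_zero_of_natDegree_lt (by omega)]
      simp
  have hP0 : aeval x P = 0 := by
    rw [hP]
    simp only [map_add, map_sub, map_mul, map_pow, aeval_X, aeval_C, eq_intCast, map_intCast]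
    exact hx
  have hpq : aeval x p = aeval x q := by
    conv_lhs => rw [← modByMonic_add_div p P]
    rw [map_add, map_mul, hP0, zero_mul, add_zero]
  rw [hpq]
  conv_lhs => rw [hqeq]
  simp [eq_intCast]

private lemma aux_real {L : Type*} [Field L] [CharZero L] (θ' : L)
    (hgen : IntermediateField.adjoin ℚ {θ'} = ⊤) (τ : L →+* ℂ)
    (him : (τ θ').im = 0) : NumberField.ComplexEmbedding.IsReal τ := by
  rw [NumberField.ComplexEmbedding.isReal_iff]
  ext x
  have hx : x ∈ IntermediateField.adjoin ℚ {θ'} := by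
    rw [hgen]; exact IntermediateField.mem_top
  show (starRingEnd ℂ) (τ x) = τ x
  refine IntermediateField.adjoin_induction ℚ (p := fun x _ => (starRingEnd ℂ) (τ x) = τ x)
    ?_ ?_ ?_ ?_ ?_ hx
  · rintro y hy
    rcases hy with rfl
    exact Complex.conj_eq_iff_im.mpr him
  · intro q
    simp [Complex.conj_eq_iff_im, map_ratCast]
  · intro a c _ _ ha hc
    simp [map_add, ha, hc]
  · intro a _ ha
    simp [map_inv₀, ha]
  · intro a c _ _ ha hc
    simp [map_mul, ha, hc]

set_option maxHeartbeats 4000000 in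
theorem cubic_trinomial_theta_is_lattice_minimum
    (r b : ℕ) (hr : 1 ≤ r) (hb : 2 ≤ b) (hsf : Squarefree b)
    (L : Type*) [Field L] [NumberField L] (θ : 𝓞 L)
    (hroot : (θ : L) ^ 3 + ((3 * r * b : ℕ) : L) * (θ : L) - (b : L) = 0)
    (hirr : Irreducible
      ((X ^ 3 + C ((3 * r * b : ℕ) : ℤ) * X - C ((b : ℕ) : ℤ) : Polynomial ℤ).map
        (Int.castRingHom ℚ)))
    (hgen : IntermediateField.adjoin ℚ {((θ : L))} = ⊤)
    (hmono : Algebra.adjoin ℤ {((θ : L))} = integralClosure ℤ L)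
    (ι : L →+* ℝ) (τ : L →+* ℂ) (hτ : ¬ NumberField.ComplexEmbedding.IsReal τ) :
    ¬ ∃ ν : 𝓞 L, ν ≠ 0 ∧ |ι ((ν : L))| < ι ((θ : L)) ∧
      ‖τ ((ν : L))‖ < ‖τ ((θ : L))‖ := by
  rintro ⟨ν, hν0, h1, h2⟩
  -- basic real casts
  have hr' : (1 : ℝ) ≤ (r : ℝ) := by exact_mod_cast hr
  have hb' : (2 : ℝ) ≤ (b : ℝ) := by exact_mod_cast hb
  set c3 : ℝ := 3 * (r : ℝ) * (b : ℝ) with hc3def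
  have hc3 : 6 ≤ c3 := by nlinarith
  -- representation ν = u + v θ + w θ²
  have hνmem : (ν : L) ∈ Algebra.adjoin ℤ {((θ : L))} := by
    rw [hmono]; exact ν.2
  rw [Algebra.adjoin_singleton_eq_range_aeval] at hνmem
  obtain ⟨p, hp⟩ := hνmem
  have hp' : (aeval ((θ : L))) p = ((ν : L)) := hp
  have hxint : ((θ : L)) ^ 3 + (((3 * r * b : ℕ) : ℤ) : L) * (θ : L)
      - (((b : ℕ) : ℤ) : L) = 0 := by
    push_cast
    push_cast at hroot
    linear_combination hroot
  obtain ⟨u, v, w, huvw⟩ := aux_rep ((3 * r * b : ℕ) : ℤ) ((b : ℕ) : ℤ) ((θ : L)) hxint p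
  rw [hp'] at huvw
  -- real root t
  set t : ℝ := ι ((θ : L)) with htdef
  have hre : t ^ 3 + c3 * t - (b : ℝ) = 0 := by
    have := congrArg ι hroot
    simp only [map_add, map_sub, map_mul, map_pow, map_natCast, map_zero] at this
    rw [hc3def]
    push_cast at this ⊢
    linear_combination this
  have ht0 : 0 < t := by
    by_contra h
    push_neg at h
    nlinarith [mul_nonneg (mul_self_nonneg t) (neg_nonneg.mpr h)]
  have hc3b : 3 * (b : ℝ) ≤ c3 := by rw [hc3def]; nlinarith
  have ht3 : t < 1 / 3 := by
    by_contra h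
    push_neg at h
    have f1 : 3 * (b : ℝ) * t ≤ c3 * t := mul_le_mul_of_nonneg_right hc3b (le_of_lt ht0)
    have f2 : (b : ℝ) ≤ 3 * (b : ℝ) * t := by nlinarith
    nlinarith [pow_pos ht0 3]
  -- complex root z
  set z : ℂ := τ ((θ : L)) with hzdef
  have hy0 : z.im ≠ 0 := fun h => hτ (aux_real _ hgen τ h)
  have hzc : z ^ 3 + (c3 : ℂ) * z - ((b : ℝ) : ℂ) = 0 := by
    have := congrArg τ hroot
    simp only [map_add, map_sub, map_mul, map_pow, map_natCast, map_zero] at this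
    rw [hc3def]
    push_cast at this ⊢
    linear_combination this
  have hreC : ((t : ℂ)) ^ 3 + (c3 : ℂ) * (t : ℂ) - ((b : ℝ) : ℂ) = 0 := by
    exact_mod_cast congrArg (Complex.ofReal) hre
  have hzt : z - (t : ℂ) ≠ 0 := by
    intro h
    apply hy0
    rw [sub_eq_zero] at h
    rw [h]
    simp
  have hquad : z ^ 2 + (t : ℂ) * z + ((t ^ 2 + c3 : ℝ) : ℂ) = 0 := by
    have hfac : (z - (t : ℂ)) * (z ^ 2 + (t : ℂ) * z + ((t ^ 2 + c3 : ℝ) : ℂ)) = 0 := by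
      push_cast
      linear_combination hzc - hreC
    rcases mul_eq_zero.mp hfac with h | h
    · exact absurd h hzt
    · exact h
  set x : ℝ := z.re with hxdef
  set y : ℝ := z.im with hydef
  have him := congrArg Complex.im hquad
  have hre2 := congrArg Complex.re hquad
  rw [pow_two] at him hre2
  simp only [Complex.add_im, Complex.add_re, Complex.mul_im, Complex.mul_re,
    Complex.ofReal_im, Complex.ofReal_re, Complex.zero_im, Complex.zero_re] at him hre2
  rw [← hxdef, ← hydef] at him hre2
  -- him : x * y + y * x + (t * y + 0 * x) + 0 = 0 (roughly)
  have hX : x = -t / 2 := by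
    have hyy : y * (2 * x + t) = 0 := by linarith [him]
    rcases mul_eq_zero.mp hyy with h | h
    · exact absurd h hy0
    · linarith
  have hY : y * y = 3 / 4 * t ^ 2 + c3 := by
    linear_combination (-1 : ℝ) * hre2 + (x + t / 2) * hX
  -- embeddings of ν
  have hν1 : ι ((ν : L)) = (u : ℝ) + (v : ℝ) * t + (w : ℝ) * t ^ 2 := by
    have := congrArg ι huvw
    simpa only [map_add, map_mul, map_pow, map_intCast] using this
  have hν2 : τ ((ν : L)) = (u : ℂ) + (v : ℂ) * z + (w : ℂ) * z ^ 2 := by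
    have := congrArg τ huvw
    simpa only [map_add, map_mul, map_pow, map_intCast] using this
  set U : ℝ := (u : ℝ)
  set V : ℝ := (v : ℝ)
  set W : ℝ := (w : ℝ)
  have hN : |U + V * t + W * t ^ 2| < t := by rw [← hν1]; exact h1
  -- squared modulus inequality
  have hG2 : (U + V * x + W * (x * x - y * y)) ^ 2 + (V * y + W * (x * y + y * x)) ^ 2
      < x * x + y * y := by
    have hsq : ‖τ ((ν : L))‖ ^ 2 < ‖z‖ ^ 2 :=
      pow_lt_pow_left₀ h2 (norm_nonneg _) two_ne_zero
    rw [Complex.sq_norm, Complex.sq_norm, Complex.normSq_apply, Complex.normSq_apply] at hsq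
    have hreν : (τ ((ν : L))).re = U + V * x + W * (x * x - y * y) := by
      rw [hν2, pow_two]
      simp [Complex.add_re, Complex.mul_re, Complex.intCast_re, Complex.intCast_im]
      all_goals ring
    have himν : (τ ((ν : L))).im = V * y + W * (x * y + y * x) := by
      rw [hν2, pow_two]
      simp [Complex.add_im, Complex.mul_im, Complex.intCast_re, Complex.intCast_im]
      all_goals ring
    rw [hreν, himν] at hsq
    rw [← hxdef, ← hydef] at hsq
    convert hsq using 2 <;> rw [pow_two]
  -- now pure real arithmetic
  have hNt : |U + V * t + W * t ^ 2| < t := hN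
  set N : ℝ := U + V * t + W * t ^ 2 with hNdef
  set R : ℝ := U + V * x + W * (x * x - y * y) with hRdef
  set Cq : ℝ := V - W * t with hCdef
  have hXX : x * x = t ^ 2 / 4 := by rw [hX]; ring
  clear_value t z x y N R Cq
  clear hp hp' hirr hsf hmono hgen hroot hxint hzc hreC hquad him hre2 h1 h2 hτ hzt hν1 hν2 hN
  have hyy0 : 0 < y * y := by
    rcases (mul_self_pos).mpr hy0 with h
    exact h
  have hIdent : (V * y + W * (x * y + y * x)) ^ 2 = Cq ^ 2 * (y * y) := by
    rw [hCdef, hX]; ring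
  have hCsq : Cq ^ 2 < 4 / 3 := by
    have h1' : Cq ^ 2 * (3 / 4 * t ^ 2 + c3) < t ^ 2 + c3 := by
      nlinarith [sq_nonneg R, hG2, hIdent, hXX, hY]
    by_contra hcon
    push_neg at hcon
    have hpos : (0:ℝ) < 3 / 4 * t ^ 2 + c3 := by nlinarith
    have := mul_le_mul_of_nonneg_right hcon (le_of_lt hpos)
    nlinarith
  have hCabs : |Cq| ≤ 7 / 6 := by
    rw [abs_le]
    constructor <;> nlinarith [hCsq]
  have hRsq : R ^ 2 < t ^ 2 + c3 := by
    nlinarith [hG2, sq_nonneg (V * y + W * (x * y + y * x)), hXX, hY]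
  have hRabs : |R| ≤ (t ^ 2 + c3 + 1) / 2 := by
    rw [abs_le]
    constructor <;> nlinarith [hRsq, sq_nonneg (t ^ 2 + c3 - 1)]
  have hWeq : W * (3 * t ^ 2 + c3) = N - R - 3 / 2 * t * Cq := by
    rw [hNdef, hRdef, hCdef, hX]
    linear_combination (-W : ℝ) * hY
  have h3pos : 0 < 3 * t ^ 2 + c3 := by nlinarith
  have hWabs : |W| * (3 * t ^ 2 + c3) < 3 * t ^ 2 + c3 := by
    have habs : |W * (3 * t ^ 2 + c3)| ≤ |N| + |R| + 3 / 2 * t * |Cq| := by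
      rw [hWeq]
      calc |N - R - 3 / 2 * t * Cq| ≤ |N - R| + |3 / 2 * t * Cq| := abs_sub _ _
        _ ≤ |N| + |R| + |3 / 2 * t * Cq| := by
            have := abs_sub N R
            linarith
        _ = |N| + |R| + 3 / 2 * t * |Cq| := by
            rw [abs_mul, abs_of_nonneg (by linarith : (0:ℝ) ≤ 3 / 2 * t)]
    rw [abs_mul, abs_of_pos h3pos] at habs
    calc |W| * (3 * t ^ 2 + c3) ≤ |N| + |R| + 3 / 2 * t * |Cq| := habs
      _ < 3 * t ^ 2 + c3 := by nlinarith [hNt, hRabs, hCabs, abs_nonneg Cq]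
  have hWlt1 : |W| < 1 := by
    have := (mul_lt_mul_iff_left₀ h3pos).mp (by linarith [hWabs] : |W| * (3 * t ^ 2 + c3) < 1 * (3 * t ^ 2 + c3))
    exact this
  have hw0 : w = 0 := by
    have : |(w : ℝ)| < 1 := hWlt1
    rw [← Int.cast_abs] at this
    have h9 : |w| < 1 := by exact_mod_cast this
    rcases abs_lt.mp h9 with ⟨ha, hb⟩
    omega
  subst hw0
  have hW0 : W = 0 := by simp [W]
  rw [hW0] at hCdef hNdef
  have hVabs : |V| ≤ 7 / 6 := by
    have : Cq = V := by rw [hCdef]; ring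
    rw [← this]; exact hCabs
  have hUabs : |U| < 1 := by
    have h1'' : |U + V * t| < t := by
      have := hNt
      rw [hNdef] at this
      simpa using this
    have := abs_abs_sub_abs_le_abs_sub (U + V * t) (V * t)
    have habsVt : |V * t| ≤ 7 / 6 * t := by
      rw [abs_mul, abs_of_pos ht0]
      nlinarith [hVabs, ht0]
    have : |U| ≤ |U + V * t| + |V * t| := by
      calc |U| = |(U + V * t) - V * t| := by ring_nf
        _ ≤ |U + V * t| + |V * t| := abs_sub _ _
    nlinarith [this, h1'', habsVt, ht0, ht3]
  have hu0 : u = 0 := by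
    have : |(u : ℝ)| < 1 := hUabs
    rw [← Int.cast_abs] at this
    have h9 : |u| < 1 := by exact_mod_cast this
    rcases abs_lt.mp h9 with ⟨ha, hb⟩
    omega
  subst hu0
  have hU0 : U = 0 := by simp [U]
  have hv0 : v = 0 := by
    have hVt : |V * t| < t := by
      have := hNt
      rw [hNdef, hU0] at this
      simpa using this
    rw [abs_mul, abs_of_pos ht0] at hVt
    have hVlt : |V| < 1 := by
      have := (mul_lt_mul_iff_left₀ ht0).mp (by linarith [hVt] : |V| * t < 1 * t)
      exact this
    have : |(v : ℝ)| < 1 := hVlt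
    rw [← Int.cast_abs] at this
    have h9 : |v| < 1 := by exact_mod_cast this
    rcases abs_lt.mp h9 with ⟨ha, hb⟩
    omega
  subst hv0
  have : (ν : L) = 0 := by
    rw [huvw]; simp
  have hcoe : (algebraMap (𝓞 L) L) ν = 0 := this
  exact hν0 (NumberField.RingOfIntegers.coe_eq_zero_iff.mp hcoe)
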